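/- Let G be a finite connected graph with edge set E and ω an open subset meeting a subset E_ω of edges. The following are equivalent: (a) every cycle of G and every path connecting two exterior vertices meets ω; (b) the subgraph of uncontrolled edges E \ E_ω is a forest in which each connected component (tree) contains at most one exterior vertex of the original graph G. -/
import Mathlib


/-- A finite graph (multigraph): finitely many edges, each with two (possibly equal)
endpoint vertices. Loops and parallel edges are allowed. -/
structure MultiGraph where
  V : Type
  E : Type
  [fintV : Fintype V]
  [fintE : Fintype E]
  [decV : DecidableEq V]
  ends : E → V × V

attribute [instance] MultiGraph.fintV MultiGraph.fintE MultiGraph.decV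

namespace MultiGraph

variable (G : MultiGraph)

/-- An edge is incident to a vertex if the vertex is one of its endpoints. -/
def Incident (e : G.E) (v : G.V) : Prop :=
  (G.ends e).1 = v ∨ (G.ends e).2 = v

/-- The degree of a vertex (a loop counts twice). -/
def degree (v : G.V) : ℕ :=
  ∑ e : G.E, ((if (G.ends e).1 = v then 1 else 0) + (if (G.ends e).2 = v then 1 else 0))

/-- A vertex is exterior when it is attached to the graph by exactly one edge end. -/
def Exterior (v : G.V) : Prop := G.degree v = 1

/-- A vertex is interior when at least two edge ends are attached to it. -/
def Interior (v : G.V) : Prop := 2 ≤ G.degree v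

/-- A walk along the edges of the graph: a sequence of n edges together with the
n+1 vertices visited, each edge joining two consecutive vertices. -/
structure Walk (G : MultiGraph) where
  n : ℕ
  vert : Fin (n + 1) → G.V
  edge : Fin n → G.E
  compat : ∀ i : Fin n,
    G.ends (edge i) = (vert i.castSucc, vert i.succ) ∨
    G.ends (edge i) = (vert i.succ, vert i.castSucc)

namespace Walk

variable {G}

/-- Starting vertex of a walk. -/
def start (w : Walk G) : G.V := w.vert 0

/-- Final vertex of a walk. -/
def finish (w : Walk G) : G.V := w.vert (Fin.last w.n)

/-- A walk meets a set of edges if it traverses one of them. -/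
def Meets (w : Walk G) (S : Set G.E) : Prop := ∃ i, w.edge i ∈ S

/-- All edges of the walk belong to the set `S`. -/
def EdgesIn (w : Walk G) (S : Set G.E) : Prop := ∀ i, w.edge i ∈ S

/-- A cycle: a closed walk of positive length traversing pairwise distinct edges. -/
def IsCycle (w : Walk G) : Prop :=
  1 ≤ w.n ∧ w.start = w.finish ∧ Function.Injective w.edge

end Walk

/-- The graph is connected: any two vertices are joined by a walk. -/
def Connected : Prop := ∀ v v' : G.V, ∃ w : Walk G, w.start = v ∧ w.finish = v'

end MultiGraph

open MultiGraph

namespace MultiGraph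
namespace Walk

variable {G : MultiGraph}

private lemma vert_congr (w : Walk G) {x y : ℕ} (hxy : x = y)
    (p : x < w.n + 1) (q : y < w.n + 1) : w.vert ⟨x, p⟩ = w.vert ⟨y, q⟩ := by
  subst hxy; rfl

private lemma edge_congr (w : Walk G) {x y : ℕ} (hxy : x = y)
    (p : x < w.n) (q : y < w.n) : w.edge ⟨x, p⟩ = w.edge ⟨y, q⟩ := by
  subst hxy; rfl

/-- Splicing out a subwalk between two equal vertices. -/
lemma splice (w : Walk G) (a b : Fin (w.n + 1)) (hab : a.val ≤ b.val)
    (hv : w.vert a = w.vert b) :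
    ∃ w' : Walk G, w'.n = w.n - (b.val - a.val) ∧ w'.start = w.start ∧
      w'.finish = w.finish ∧ ∀ i, ∃ j, w'.edge i = w.edge j := by
  have hb : b.val ≤ w.n := by omega
  have hveq : ∀ (p : a.val < w.n + 1) (q : b.val < w.n + 1),
      w.vert ⟨a.val, p⟩ = w.vert ⟨b.val, q⟩ := by
    intro p q
    have e1 : (⟨a.val, p⟩ : Fin (w.n + 1)) = a := Fin.ext rfl
    have e2 : (⟨b.val, q⟩ : Fin (w.n + 1)) = b := Fin.ext rfl
    rw [e1, e2, hv]
  refine ⟨{ n := w.n - (b.val - a.val)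
            vert := fun k =>
              w.vert ⟨if k.val < a.val then k.val else k.val + (b.val - a.val),
                by have := k.isLt; split <;> omega⟩
            edge := fun i =>
              w.edge ⟨if i.val < a.val then i.val else i.val + (b.val - a.val),
                by have := i.isLt; split <;> omega⟩
            compat := ?_ }, rfl, ?_, ?_, ?_⟩
  · intro i
    have hi := i.isLt
    simp only [Fin.coe_castSucc, Fin.val_succ]
    by_cases h : (i : ℕ) < a.val
    · have e : (if (i : ℕ) < a.val then (i : ℕ) else (i : ℕ) + (b.val - a.val))
          = (i : ℕ) := if_pos h
      rw [edge_congr w e _ (by omega), vert_congr w e _ (by omega)]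
      by_cases h2 : (i : ℕ) + 1 < a.val
      · have e2 : (if (i : ℕ) + 1 < a.val then (i : ℕ) + 1
            else (i : ℕ) + 1 + (b.val - a.val)) = (i : ℕ) + 1 := if_pos h2
        rw [vert_congr w e2 _ (by omega)]
        exact w.compat ⟨(i : ℕ), by omega⟩
      · have e2 : (if (i : ℕ) + 1 < a.val then (i : ℕ) + 1
            else (i : ℕ) + 1 + (b.val - a.val)) = b.val := by rw [if_neg h2]; omega
        rw [vert_congr w e2 _ (by omega), ← hveq (by omega) (by omega),
          vert_congr w (show a.val = (i : ℕ) + 1 by omega) _ (by omega)]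
        exact w.compat ⟨(i : ℕ), by omega⟩
    · have e : (if (i : ℕ) < a.val then (i : ℕ) else (i : ℕ) + (b.val - a.val))
          = (i : ℕ) + (b.val - a.val) := if_neg h
      have e2 : (if (i : ℕ) + 1 < a.val then (i : ℕ) + 1
          else (i : ℕ) + 1 + (b.val - a.val)) = (i : ℕ) + (b.val - a.val) + 1 := by
        rw [if_neg (by omega)]; omega
      rw [edge_congr w e _ (by omega), vert_congr w e _ (by omega),
        vert_congr w e2 _ (by omega)]
      exact w.compat ⟨(i : ℕ) + (b.val - a.val), by omega⟩
  · show w.vert _ = w.vert 0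
    by_cases h : 0 < a.val
    · have e : (if (0 : Fin (w.n - (b.val - a.val) + 1)).val < a.val
          then (0 : Fin (w.n - (b.val - a.val) + 1)).val
          else (0 : Fin (w.n - (b.val - a.val) + 1)).val + (b.val - a.val)) = 0 := by
        simp [h]
      rw [vert_congr w e _ (by omega)]
      exact vert_congr w rfl _ _
    · have e : (if (0 : Fin (w.n - (b.val - a.val) + 1)).val < a.val
          then (0 : Fin (w.n - (b.val - a.val) + 1)).val
          else (0 : Fin (w.n - (b.val - a.val) + 1)).val + (b.val - a.val))
          = b.val := by simp [h]; omega
      rw [vert_congr w e _ (by omega), ← hveq (by omega) (by omega),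
        show (0 : Fin (w.n + 1)) = ⟨0, by omega⟩ from Fin.ext (by simp)]
      exact vert_congr w (by omega) _ _
  · show w.vert _ = w.vert (Fin.last w.n)
    have e : (if (Fin.last (w.n - (b.val - a.val))).val < a.val
        then (Fin.last (w.n - (b.val - a.val))).val
        else (Fin.last (w.n - (b.val - a.val))).val + (b.val - a.val)) = w.n := by
      rw [if_neg (by simp [Fin.last]; omega)]; simp [Fin.last]; omega
    rw [vert_congr w e _ (by omega)]
    exact vert_congr w rfl _ _
  · intro i
    exact ⟨_, rfl⟩

/-- Every walk contains an edge-injective walk (a trail) with the same endpoints,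
using only edges of the original walk. -/
lemma exists_trail : ∀ (n : ℕ) (w : Walk G), w.n = n →
    ∃ w' : Walk G, Function.Injective w'.edge ∧ w'.start = w.start ∧
      w'.finish = w.finish ∧ ∀ i, ∃ j, w'.edge i = w.edge j := by
  intro n
  induction n using Nat.strong_induction_on with
  | _ n ih =>
    intro w hw
    by_cases hinj : Function.Injective w.edge
    · exact ⟨w, hinj, rfl, rfl, fun i => ⟨i, rfl⟩⟩
    · obtain ⟨i, j, hij, hne⟩ := Function.not_injective_iff.mp hinj
      obtain ⟨p, q, hpq, hlt⟩ : ∃ p q : Fin w.n, w.edge p = w.edge q ∧ p.val < q.val := by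
        rcases lt_trichotomy i.val j.val with h | h | h
        exacts [⟨i, j, hij, h⟩, absurd (Fin.ext h) hne, ⟨j, i, hij.symm, h⟩]
      have hc1 := w.compat p
      have hc2 := w.compat q
      rw [hpq] at hc1
      obtain ⟨a, b, hab, hbp, hv⟩ : ∃ a b : Fin (w.n + 1), a.val ≤ b.val ∧
          (0 < b.val - a.val ∧ b.val - a.val ≤ w.n) ∧ w.vert a = w.vert b := by
        rcases hc1 with h1 | h1 <;> rcases hc2 with h2 | h2 <;> rw [h1] at h2 <;>
          obtain ⟨e1, e2⟩ := Prod.mk.injEq .. ▸ h2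
        · exact ⟨p.castSucc, q.castSucc, by simp; omega,
            ⟨by simp; omega, by simp; omega⟩, e1⟩
        · exact ⟨p.castSucc, q.succ, by simp; omega,
            ⟨by simp; omega, by simp; omega⟩, e1⟩
        · exact ⟨p.castSucc, q.succ, by simp; omega,
            ⟨by simp; omega, by simp; omega⟩, e2⟩
        · exact ⟨p.castSucc, q.castSucc, by simp; omega,
            ⟨by simp; omega, by simp; omega⟩, e2⟩
      obtain ⟨w2, hn2, hs2, hf2, hsub2⟩ := w.splice a b hab hv
      obtain ⟨w3, hinj3, hs3, hf3, hsub3⟩ := ih w2.n (by omega) w2 rfl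
      refine ⟨w3, hinj3, hs3.trans hs2, hf3.trans hf2, fun k => ?_⟩
      obtain ⟨k2, hk2⟩ := hsub3 k
      obtain ⟨k3, hk3⟩ := hsub2 k2
      exact ⟨k3, hk2.trans hk3⟩

end Walk
end MultiGraph

/-- Combinatorial equivalence in the characterization of (GGCC): for a finite
connected graph `G` with controlled edge set `Eω`, the following are equivalent:
(a) every cycle of `G`, and every path connecting two distinct exterior vertices,
contains a controlled edge;
(b) the subgraph of uncontrolled edges contains no cycle (it is a forest) and no two
distinct exterior vertices of `G` are connected through uncontrolled edges (each tree
of the forest contains at most one exterior vertex of `G`). -/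
theorem ggcc_iff_uncontrolled_forest (G : MultiGraph) (hconn : G.Connected)
    (Eω : Set G.E) :
    ((∀ w : Walk G, w.IsCycle → w.Meets Eω) ∧
      (∀ w : Walk G, Function.Injective w.edge →
        G.Exterior w.start → G.Exterior w.finish → w.start ≠ w.finish → w.Meets Eω))
    ↔
    ((∀ w : Walk G, w.EdgesIn Eωᶜ → ¬ w.IsCycle) ∧
      (∀ v v' : G.V, G.Exterior v → G.Exterior v' → v ≠ v' →
        ¬ ∃ w : Walk G, w.EdgesIn Eωᶜ ∧ w.start = v ∧ w.finish = v')) := by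
  constructor
  · rintro ⟨ha, hb⟩
    constructor
    · intro w hw hcyc
      obtain ⟨i, hi⟩ := ha w hcyc
      exact hw i hi
    · rintro v v' hv hv' hne ⟨w, hw, rfl, rfl⟩
      obtain ⟨w', hinj, hs, hf, hsub⟩ := Walk.exists_trail w.n w rfl
      obtain ⟨i, hi⟩ := hb w' hinj (by rw [hs]; exact hv) (by rw [hf]; exact hv')
        (by rw [hs, hf]; exact hne)
      obtain ⟨j, hj⟩ := hsub i
      exact hw j (hj ▸ hi)
  · rintro ⟨ha, hb⟩
    constructor
    · intro w hcyc
      by_contra hm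
      exact ha w (fun i => fun h => hm ⟨i, h⟩) hcyc
    · intro w hinj hv hv' hne
      by_contra hm
      exact hb w.start w.finish hv hv' hne ⟨w, fun i h => hm ⟨i, h⟩, rfl, rfl⟩
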